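/- Fix a constant C2 ≥ 0. There exist c > 0 and N such that for all n ≥ N the following holds: let s = ⌊√n⌋ and m = ⌈2^s/n^{C2}⌉; let S_1, …, S_m be independent uniformly random s-element subsets of [n], and let x be uniform on {0,1}^n, independent of the S_j. Then Pr[∃ j ∈ [m] such that x_i = 1 for all i ∈ S_j] ≥ c/n^{C2}. Equivalently, the random DNF f(x) = ∨_j ∧_{i∈S_j} x_i satisfies E[B[f]] ≥ c/n^{C2}. -/

import Mathlib

open Finset

/-- Level (Hamming weight) of a point of the Boolean cube. -/
def level {n : ℕ} (x : Fin n → Bool) : ℕ :=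
  (Finset.univ.filter (fun i => x i = true)).card

/-- Probability, under the noise distribution `T_δ`, of obtaining the pair `(x, z)`:
`x` is uniform on `{0,1}^n` and each coordinate of `z` independently equals the
corresponding coordinate of `x` with probability `1 − δ` and is flipped with
probability `δ`. -/
noncomputable def noisePairProb (n : ℕ) (δ : ℝ) (x z : Fin n → Bool) : ℝ :=
  (1 / 2 ^ n) * ∏ i : Fin n, (if z i = x i then 1 - δ else δ)

/-- Noise sensitivity: `NS_δ[f] = Pr_{(x,z)∼T_δ}[f(x) ≠ f(z)]`. -/
noncomputable def NS (n : ℕ) (δ : ℝ) (f : (Fin n → Bool) → Bool) : ℝ :=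
  ∑ x : Fin n → Bool, ∑ z : Fin n → Bool,
    noisePairProb n δ x z * (if f x ≠ f z then 1 else 0)

/-- Influence: `I[f] = n · Pr_{x, i}[f(x) ≠ f(x^{⊕i})]`. -/
noncomputable def influence (n : ℕ) (f : (Fin n → Bool) → Bool) : ℝ :=
  (1 / 2 ^ n) * ∑ x : Fin n → Bool, ∑ i : Fin n,
    (if f x ≠ f (Function.update x i (!(x i))) then (1 : ℝ) else 0)

/-- Bias: `B[f] = Pr_{x uniform}[f(x) = 1]`. -/
noncomputable def bias (n : ℕ) (f : (Fin n → Bool) → Bool) : ℝ :=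
  (1 / 2 ^ n) * ∑ x : Fin n → Bool, (if f x = true then (1 : ℝ) else 0)

/-- The set of all tuples of `m` clauses, each clause an `s`-element subset of `[n]`. -/
def clauseTuples (n m s : ℕ) : Finset (Fin m → Finset (Fin n)) :=
  Finset.univ.filter (fun S => ∀ j, (S j).card = s)

/-- The DNF determined by the clause tuple `S`: `f(x) = 1` iff there is `j` with
`x_i = 1` for all `i ∈ S j`. -/
def dnfF (n m : ℕ) (S : Fin m → Finset (Fin n)) : (Fin n → Bool) → Bool :=
  fun x => decide (∃ j, ∀ i ∈ S j, x i = true)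

lemma card_clauseTuples (n m s : ℕ) :
    (clauseTuples n m s).card = (n.choose s) ^ m := by
  have h : clauseTuples n m s
      = Fintype.piFinset (fun _ : Fin m => Finset.univ.powersetCard s) := by
    ext S
    simp [clauseTuples, Fintype.mem_piFinset, Finset.mem_powersetCard_univ]
  rw [h, Fintype.card_piFinset]
  simp [Finset.card_powersetCard]

lemma card_unsat (n m s : ℕ) (x : Fin n → Bool) :
    ((clauseTuples n m s).filter (fun S => ¬ dnfF n m S x = true)).card
      = (n.choose s - (level x).choose s) ^ m := by
  have h : (clauseTuples n m s).filter (fun S => ¬ dnfF n m S x = true)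
      = Fintype.piFinset (fun _ : Fin m =>
          (Finset.univ.powersetCard s).filter (fun T => ¬ ∀ i ∈ T, x i = true)) := by
    ext S
    simp only [clauseTuples, dnfF, Finset.mem_filter, Finset.mem_univ, true_and,
      Fintype.mem_piFinset, Finset.mem_powersetCard_univ, decide_eq_true_eq, not_exists]
    constructor
    · rintro ⟨h1, h2⟩ j; exact ⟨h1 j, h2 j⟩
    · intro h; exact ⟨fun j => (h j).1, fun j => (h j).2⟩
  rw [h, Fintype.card_piFinset]
  have hgood : ((Finset.univ.powersetCard s).filter (fun T => ∀ i ∈ T, x i = true))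
      = (Finset.univ.filter (fun i => x i = true)).powersetCard s := by
    ext T
    simp only [Finset.mem_filter, Finset.mem_powersetCard_univ, Finset.mem_powersetCard,
      Finset.subset_iff, Finset.mem_filter, Finset.mem_univ, true_and]
    tauto
  have hsplit := Finset.card_filter_add_card_filter_not
    (s := Finset.univ.powersetCard s) (p := fun T => ∀ i ∈ T, x i = true)
  have hg : ((Finset.univ.powersetCard s).filter (fun T => ∀ i ∈ T, x i = true)).card
      = (level x).choose s := by
    rw [hgood, Finset.card_powersetCard]; rfl
  have htot : (Finset.univ.powersetCard s (α := Fin n)).card = n.choose s := by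
    rw [Finset.card_powersetCard]; simp
  have hcard : ((Finset.univ.powersetCard s).filter (fun T => ¬ ∀ i ∈ T, x i = true)).card
      = n.choose s - (level x).choose s := by omega
  rw [hcard]
  simp

lemma sum_bias (n m s : ℕ) :
    ∑ S ∈ clauseTuples n m s, bias n (dnfF n m S)
      = (1 / 2 ^ n) * ∑ x : Fin n → Bool,
          (((n.choose s) ^ m : ℝ) - ((n.choose s - (level x).choose s : ℕ) : ℝ) ^ m) := by
  unfold bias
  rw [← Finset.mul_sum, Finset.sum_comm]
  congr 1
  apply Finset.sum_congr rfl
  intro x _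
  have hsat : ((clauseTuples n m s).filter (fun S => dnfF n m S x = true)).card
      = (n.choose s) ^ m - (n.choose s - (level x).choose s) ^ m := by
    have := Finset.card_filter_add_card_filter_not
      (s := clauseTuples n m s) (p := fun S => dnfF n m S x = true)
    rw [card_unsat] at this
    rw [card_clauseTuples n m s] at this
    omega
  have hsum : ∑ S ∈ clauseTuples n m s, (if dnfF n m S x = true then (1:ℝ) else 0)
      = ((clauseTuples n m s).filter (fun S => dnfF n m S x = true)).card := by
    rw [Finset.sum_ite, Finset.sum_const, Finset.sum_const]
    simp
  rw [hsum, hsat]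
  have hle : (n.choose s - (level x).choose s) ^ m ≤ (n.choose s) ^ m :=
    Nat.pow_le_pow_left (Nat.sub_le _ _) m
  push_cast [Nat.cast_sub hle]
  ring

lemma level_le (n : ℕ) (x : Fin n → Bool) : level x ≤ n := by
  simpa [level] using (Finset.card_filter_le Finset.univ (fun i => x i = true)).trans (by simp)

lemma level_not (n : ℕ) (x : Fin n → Bool) : level (fun i => !(x i)) = n - level x := by
  have h : (Finset.univ.filter (fun i => (!(x i)) = true))
      = Finset.univ.filter (fun i => ¬ (x i = true)) := by
    ext i; simp
  have hsplit := Finset.card_filter_add_card_filter_not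
    (s := Finset.univ (α := Fin n)) (p := fun i => x i = true)
  simp only [Finset.card_univ, Fintype.card_fin] at hsplit
  unfold level
  rw [h]
  omega

lemma half_count (n : ℕ) :
    2 ^ n ≤ 2 * ((Finset.univ.filter (fun x : Fin n → Bool => n ≤ 2 * level x)).card) := by
  have hsplit := Finset.card_filter_add_card_filter_not
    (s := Finset.univ (α := Fin n → Bool)) (p := fun x => n ≤ 2 * level x)
  have htot : (Finset.univ (α := Fin n → Bool)).card = 2 ^ n := by
    simp [Finset.card_univ]
  have hle : ((Finset.univ.filter (fun x : Fin n → Bool => ¬ n ≤ 2 * level x)).card)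
      ≤ ((Finset.univ.filter (fun x : Fin n → Bool => n ≤ 2 * level x)).card) := by
    apply Finset.card_le_card_of_injOn (fun x => fun i => !(x i))
    · intro x hx
      simp only [Finset.coe_filter, Finset.mem_coe, Set.mem_setOf_eq, Finset.mem_filter, Finset.mem_univ, true_and] at hx ⊢
      have := level_not n x
      have := level_le n x
      omega
    · intro x _ y _ hxy
      funext i
      have := congrFun hxy i
      simpa using this
  omega

lemma pow_base_lb (n s : ℕ) (hs2 : s * s ≤ n) (hs8 : 8 * s ≤ n) (hn : 0 < n) :
    (1/256 : ℝ) ≤ (((n:ℝ) - 2*s)/n)^s := by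
  have hnR : (0:ℝ) < n := by exact_mod_cast hn
  have h2s : (2*(s:ℝ)) ≤ n := by exact_mod_cast (by omega : 2*s ≤ n)
  set b : ℝ := ((n:ℝ) - 2*s)/n with hbdef
  have hb0 : 0 ≤ b := by rw [hbdef]; apply div_nonneg (by linarith) (le_of_lt hnR)
  have hb1 : b ≤ 1 := by rw [hbdef, div_le_one hnR]; nlinarith [sq_nonneg (s:ℝ)]
  set k : ℕ := s/4 + 1 with hkdef
  have hbk : (1/4 : ℝ) ≤ b^k := by
    have ha : (-2:ℝ) ≤ -(2*(s:ℝ)/n) := by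
      rw [neg_le_neg_iff]
      rw [div_le_iff₀ hnR]
      nlinarith
    have hbern := one_add_mul_le_pow ha k
    have hbeq : (1:ℝ) + -(2*(s:ℝ)/n) = b := by
      rw [hbdef]; field_simp; ring
    rw [hbeq] at hbern
    have hkle : (k:ℝ) ≤ (s:ℝ)/4 + 1 := by
      have : (s/4 : ℕ) ≤ (s:ℝ)/4 := by
        rw [le_div_iff₀ (by norm_num)]
        exact_mod_cast (by omega : (s/4) * 4 ≤ s)
      push_cast [hkdef]
      linarith
    have hfrac : (k:ℝ) * (2*(s:ℝ)/n) ≤ 3/4 := by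
      have hsn : ((s:ℝ)*s) ≤ n := by exact_mod_cast hs2
      have h8 : (8*(s:ℝ)) ≤ n := by exact_mod_cast hs8
      rw [mul_div_assoc', div_le_iff₀ hnR]
      have hs0 : (0:ℝ) ≤ s := by positivity
      nlinarith
    calc (1/4 : ℝ) = 1 - 3/4 := by norm_num
    _ ≤ 1 + (k:ℝ) * -(2*(s:ℝ)/n) := by rw [mul_neg]; linarith
    _ ≤ b^k := hbern
  have hsk : s ≤ 4*k := by omega
  calc (1/256 : ℝ) = (1/4)^4 := by norm_num
  _ ≤ (b^k)^4 := by
      apply pow_le_pow_left₀ (by norm_num) hbk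
  _ = b^(4*k) := by rw [← pow_mul, mul_comm]
  _ ≤ b^s := pow_le_pow_of_le_one hb0 hb1 hsk

lemma one_sub_pow_lb (p : ℝ) (m : ℕ) (hp0 : 0 ≤ p) (hm : 1 ≤ m) (hmp : (m:ℝ)*p ≤ 1/2) :
    (m:ℝ)*p/2 ≤ 1 - (1-p)^m := by
  have hp1 : p ≤ 1/2 := by
    have : (1:ℝ) ≤ m := by exact_mod_cast hm
    nlinarith
  have hgeom := geom_sum_mul (1-p) m
  have key : 1 - (1-p)^m = p * ∑ i ∈ Finset.range m, (1-p)^i := by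
    nlinarith [hgeom]
  rw [key]
  have hterm : ∀ i ∈ Finset.range m, (1/2:ℝ) ≤ (1-p)^i := by
    intro i hi
    have hi' : i ≤ m := le_of_lt (Finset.mem_range.mp hi)
    have h1 : (1-p)^m ≤ (1-p)^i :=
      pow_le_pow_of_le_one (by linarith) (by linarith) hi'
    have h2 : 1 - (m:ℝ)*p ≤ (1-p)^m := by
      have := one_add_mul_le_pow (a := -p) (by linarith) m
      simpa [mul_neg, sub_eq_add_neg] using this
    linarith
  have hsum : (m:ℝ)/2 ≤ ∑ i ∈ Finset.range m, (1-p)^i := by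
    calc (m:ℝ)/2 = ∑ i ∈ Finset.range m, (1/2:ℝ) := by
          rw [Finset.sum_const, Finset.card_range]; ring
    _ ≤ _ := Finset.sum_le_sum hterm
  calc (m:ℝ)*p/2 = p * ((m:ℝ)/2) := by ring
  _ ≤ p * ∑ i ∈ Finset.range m, (1-p)^i := mul_le_mul_of_nonneg_left hsum hp0

lemma choose_ratio (n s w : ℕ) (hw : n ≤ 2*w) (h2s : 2*s ≤ n) (hn : 0 < n) :
    (((n:ℝ) - 2*(s:ℝ))/(2*(n:ℝ)))^s * (n.choose s : ℝ) ≤ (w.choose s : ℝ) := by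
  have hnR : (0:ℝ) < n := by exact_mod_cast hn
  have h2sR : 2*(s:ℝ) ≤ n := by exact_mod_cast h2s
  have hq0 : 0 ≤ ((n:ℝ) - 2*s)/(2*n) := div_nonneg (by linarith) (by linarith)
  have hA : ((n:ℝ) - 2*s)/(2*n) ≤ ((w+1-s : ℕ):ℝ)/n := by
    rw [div_le_div_iff₀ (by linarith) hnR]
    have h1 : n ≤ 2*(w+1-s) + 2*s := by omega
    have h2 : ((n:ℝ)) ≤ 2*((w+1-s:ℕ):ℝ) + 2*s := by exact_mod_cast h1
    nlinarith
  have hpow : (((n:ℝ)-2*s)/(2*n))^s ≤ (((w+1-s:ℕ):ℝ)/n)^s :=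
    pow_le_pow_left₀ hq0 hA s
  have hnat : (w+1-s)^s * (n.descFactorial s) ≤ (w.descFactorial s) * n^s :=
    Nat.mul_le_mul (Nat.pow_sub_le_descFactorial w s) (Nat.descFactorial_le_pow n s)
  rw [Nat.descFactorial_eq_factorial_mul_choose, Nat.descFactorial_eq_factorial_mul_choose] at hnat
  have hR : ((w+1-s:ℕ):ℝ)^s * ((s.factorial:ℝ) * (n.choose s:ℝ))
      ≤ ((s.factorial:ℝ) * (w.choose s:ℝ)) * ((n:ℝ))^s := by exact_mod_cast hnat
  have hfac : (0:ℝ) < s.factorial := by exact_mod_cast s.factorial_pos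
  have hns : (0:ℝ) < (n:ℝ)^s := by positivity
  calc (((n:ℝ) - 2*s)/(2*n))^s * (n.choose s : ℝ)
      ≤ (((w+1-s:ℕ):ℝ)/n)^s * (n.choose s : ℝ) :=
        mul_le_mul_of_nonneg_right hpow (by positivity)
  _ ≤ (w.choose s : ℝ) := by
        rw [div_pow, div_mul_eq_mul_div, div_le_iff₀ hns]
        nlinarith [hR, hfac]


set_option maxHeartbeats 1000000 in
/-- Fix `C2 ≥ 0`. There exist `c > 0` and `N` such that for all `n ≥ N`, with
`s = ⌊√n⌋` and `m = ⌈2^s/n^{C2}⌉`, the random DNF with `m` independent uniformly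
random `s`-element clauses satisfies `E[B[f]] ≥ c/n^{C2}` (the expectation being
the average of `B[f_S]` over all clause tuples `S`). -/
theorem random_dnf_expected_bias (C2 : ℝ) (hC2 : 0 ≤ C2) :
    ∃ c : ℝ, 0 < c ∧ ∃ N : ℕ, ∀ n : ℕ, N ≤ n →
      c / (n : ℝ) ^ C2 ≤
        (∑ S ∈ clauseTuples n ⌈(2 : ℝ) ^ Nat.sqrt n / (n : ℝ) ^ C2⌉₊ (Nat.sqrt n),
            bias n (dnfF n ⌈(2 : ℝ) ^ Nat.sqrt n / (n : ℝ) ^ C2⌉₊ S)) /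
          ((clauseTuples n ⌈(2 : ℝ) ^ Nat.sqrt n / (n : ℝ) ^ C2⌉₊ (Nat.sqrt n)).card : ℝ) := by

  refine ⟨1/4096, by norm_num, 64, fun n hn => ?_⟩
  set s := Nat.sqrt n with hsdef
  have hn0 : 0 < n := by omega
  have hnR : (0:ℝ) < n := by exact_mod_cast hn0
  have hnCpos : (0:ℝ) < (n:ℝ) ^ C2 := Real.rpow_pos_of_pos hnR C2
  have hnC1 : (1:ℝ) ≤ (n:ℝ) ^ C2 := by
    calc (1:ℝ) = (1:ℝ) ^ C2 := (Real.one_rpow C2).symm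
    _ ≤ (n:ℝ) ^ C2 := by
        apply Real.rpow_le_rpow (by norm_num) (by exact_mod_cast hn0) hC2
  set m := ⌈(2 : ℝ) ^ s / (n : ℝ) ^ C2⌉₊ with hmdef
  set M := n.choose s with hMdef
  have hs2 : s * s ≤ n := by
    have h := Nat.sqrt_le' n
    rwa [pow_two] at h
  have hs8' : 8 ≤ s := by
    rw [hsdef, Nat.le_sqrt]
    omega
  have hs8 : 8 * s ≤ n := le_trans (Nat.mul_le_mul_right s hs8') hs2
  have h2s : 2 * s ≤ n := by omega
  have hsn : s ≤ n := by omega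
  have hMpos : 0 < M := Nat.choose_pos hsn
  have hMR : (0:ℝ) < M := by exact_mod_cast hMpos
  have hm1 : 1 ≤ m := Nat.one_le_ceil_iff.mpr (by positivity)
  have hm1R : (1:ℝ) ≤ m := by exact_mod_cast hm1
  have hmlow : (2:ℝ)^s / (n:ℝ)^C2 ≤ m := Nat.le_ceil _
  have hmhigh : (m:ℝ) ≤ (2:ℝ)^s + 1 := by
    have h := Nat.ceil_lt_add_one (show (0:ℝ) ≤ (2:ℝ)^s / (n:ℝ)^C2 by positivity)
    have hx : (2:ℝ)^s / (n:ℝ)^C2 ≤ (2:ℝ)^s := div_le_self (by positivity) hnC1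
    rw [hmdef]
    linarith
  -- the probability parameters
  set q : ℝ := ((n:ℝ) - 2*s)/(2*n) with hqdef
  have h2sR : 2*(s:ℝ) ≤ n := by exact_mod_cast h2s
  have hq0 : 0 ≤ q := div_nonneg (by linarith) (by linarith)
  have hqhalf : q ≤ 1/2 := by
    rw [hqdef, div_le_iff₀ (by linarith)]
    linarith
  have hb : 2*q = ((n:ℝ) - 2*s)/n := by
    rw [hqdef]; field_simp
  have hbs : (1/256:ℝ) ≤ (2*q)^s := by
    rw [hb]; exact pow_base_lb n s hs2 hs8 hn0
  have hqs_le : q^s ≤ (1/2:ℝ)^s := pow_le_pow_left₀ hq0 hqhalf s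
  set p0 : ℝ := q^s/4 with hp0def
  have hp00 : 0 ≤ p0 := by positivity
  have hmp_high : (m:ℝ)*p0 ≤ 1/2 := by
    have h2q : (2:ℝ)^s * (1/2:ℝ)^s = 1 := by
      rw [← mul_pow]; norm_num
    have hhalf1 : (1/2:ℝ)^s ≤ 1 := pow_le_one₀ (by norm_num) (by norm_num)
    have hstep : (m:ℝ)*p0 ≤ ((2:ℝ)^s + 1) * ((1/2:ℝ)^s/4) := by
      apply mul_le_mul hmhigh _ (by positivity) (by positivity)
      rw [hp0def]
      linarith
    have hpow2 : (0:ℝ) < (2:ℝ)^s := by positivity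
    nlinarith
  have hmp_low : 1/(1024*(n:ℝ)^C2) ≤ (m:ℝ)*p0 := by
    have key : (2:ℝ)^s/(n:ℝ)^C2 * q^s ≤ (m:ℝ) * q^s :=
      mul_le_mul_of_nonneg_right hmlow (by positivity)
    have key2 : (2:ℝ)^s/(n:ℝ)^C2 * q^s = (2*q)^s/(n:ℝ)^C2 := by
      rw [mul_pow]; ring
    have key3 : (1/256:ℝ)/((n:ℝ)^C2) ≤ (2*q)^s/((n:ℝ)^C2) := by
      gcongr
    have heq : 1/(1024*(n:ℝ)^C2) = ((1/256:ℝ)/((n:ℝ)^C2))/4 := by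
      field_simp
      ring
    rw [heq, hp0def]
    rw [key2] at key
    calc ((1/256:ℝ)/((n:ℝ)^C2))/4 ≤ ((2*q)^s/((n:ℝ)^C2))/4 := by linarith
    _ ≤ ((m:ℝ) * q^s)/4 := by linarith
    _ = (m:ℝ) * (q^s/4) := by ring
  have hGap : 1/(2048*(n:ℝ)^C2) ≤ 1 - (1-p0)^m := by
    have := one_sub_pow_lb p0 m hp00 hm1 hmp_high
    have heq : 1/(2048*(n:ℝ)^C2) = (1/(1024*(n:ℝ)^C2))/2 := by
      field_simp; ring
    rw [heq]
    linarith
  have hp0half : p0 ≤ 1/2 := by nlinarith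
  -- pointwise bound
  have hFlb : ∀ x : Fin n → Bool, n ≤ 2 * level x →
      ((M:ℝ))^m * (1/(2048*(n:ℝ)^C2)) ≤ ((M:ℝ))^m - ((M - (level x).choose s : ℕ):ℝ)^m := by
    intro x hx
    set w := level x with hwdef
    set K := w.choose s with hKdef
    have hKM : K ≤ M := Nat.choose_le_choose s (level_le n x)
    have hqsM : q^s * (M:ℝ) ≤ K := choose_ratio n s w hx h2s hn0
    have hpM : p0 * M ≤ (K:ℝ) := by
      have h1 : p0 ≤ q^s := by
        rw [hp0def]
        have := pow_nonneg hq0 s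
        linarith
      calc p0 * M ≤ q^s * M := mul_le_mul_of_nonneg_right h1 (le_of_lt hMR)
      _ ≤ K := hqsM
    have hcast : ((M - K : ℕ):ℝ) = (M:ℝ) - K := Nat.cast_sub hKM
    have hMK0 : (0:ℝ) ≤ (M:ℝ) - K := by
      have : (K:ℝ) ≤ M := by exact_mod_cast hKM
      linarith
    have hMK : (M:ℝ) - K ≤ (M:ℝ)*(1-p0) := by
      calc (M:ℝ) - K ≤ (M:ℝ) - p0*(M:ℝ) := by linarith
      _ = (M:ℝ)*(1-p0) := by ring
    have hpowle : ((M - K : ℕ):ℝ)^m ≤ (M:ℝ)^m * (1-p0)^m := by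
      rw [hcast, ← mul_pow]
      exact pow_le_pow_left₀ hMK0 hMK m
    have hMm : (0:ℝ) < (M:ℝ)^m := by positivity
    have h4 := mul_le_mul_of_nonneg_left hGap (le_of_lt hMm)
    have hexp : (M:ℝ)^m * (1 - (1-p0)^m) = (M:ℝ)^m - (M:ℝ)^m*(1-p0)^m := by ring
    linarith
  -- nonnegativity of each summand
  have hF0 : ∀ x : Fin n → Bool,
      (0:ℝ) ≤ ((M:ℝ))^m - ((M - (level x).choose s : ℕ):ℝ)^m := by
    intro x
    have h1 : ((M - (level x).choose s : ℕ):ℝ) ≤ (M:ℝ) := by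
      exact_mod_cast Nat.sub_le M _
    have h2 : ((M - (level x).choose s : ℕ):ℝ)^m ≤ (M:ℝ)^m :=
      pow_le_pow_left₀ (by positivity) h1 m
    linarith
  -- assemble
  set H := Finset.univ.filter (fun x : Fin n → Bool => n ≤ 2 * level x) with hHdef
  have hHcard : ((2:ℝ)^n)/2 ≤ (H.card : ℝ) := by
    have := half_count n
    have hc : ((2:ℕ)^n : ℝ) ≤ 2 * (H.card:ℝ) := by exact_mod_cast this
    push_cast at hc
    linarith
  have hsum_lb : (H.card : ℝ) * ((M:ℝ)^m * (1/(2048*(n:ℝ)^C2)))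
      ≤ ∑ x : Fin n → Bool, (((M:ℝ))^m - ((M - (level x).choose s : ℕ):ℝ)^m) := by
    calc (H.card : ℝ) * ((M:ℝ)^m * (1/(2048*(n:ℝ)^C2)))
        = ∑ _x ∈ H, (M:ℝ)^m * (1/(2048*(n:ℝ)^C2)) := by
          rw [Finset.sum_const, nsmul_eq_mul]
    _ ≤ ∑ x ∈ H, (((M:ℝ))^m - ((M - (level x).choose s : ℕ):ℝ)^m) := by
          apply Finset.sum_le_sum
          intro x hx
          rw [hHdef, Finset.mem_filter] at hx
          exact hFlb x hx.2
    _ ≤ ∑ x : Fin n → Bool, (((M:ℝ))^m - ((M - (level x).choose s : ℕ):ℝ)^m) := by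
          apply Finset.sum_le_sum_of_subset_of_nonneg (Finset.filter_subset _ _)
          intro x _ _
          exact hF0 x
  have hbias : ∑ S ∈ clauseTuples n m s, bias n (dnfF n m S)
      = (1 / 2 ^ n) * ∑ x : Fin n → Bool,
          (((M:ℝ)) ^ m - ((M - (level x).choose s : ℕ) : ℝ) ^ m) := by
    exact sum_bias n m s
  rw [card_clauseTuples]
  have hMmR : ((M ^ m : ℕ):ℝ) = (M:ℝ)^m := by push_cast; ring
  rw [hMmR]
  have hMm : (0:ℝ) < (M:ℝ)^m := by positivity
  rw [le_div_iff₀ hMm]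
  rw [hbias]
  have h2n : (0:ℝ) < (2:ℝ)^n := by positivity
  calc (1:ℝ)/4096 / (n:ℝ)^C2 * (M:ℝ)^m
      = (1/2^n) * (((2:ℝ)^n/2) * ((M:ℝ)^m * (1/(2048*(n:ℝ)^C2)))) := by
        field_simp
        ring
  _ ≤ (1/2^n) * ((H.card:ℝ) * ((M:ℝ)^m * (1/(2048*(n:ℝ)^C2)))) := by
        apply mul_le_mul_of_nonneg_left _ (by positivity)
        exact mul_le_mul_of_nonneg_right hHcard (by positivity)
  _ ≤ (1/2^n) * ∑ x : Fin n → Bool,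
        (((M:ℝ))^m - ((M - (level x).choose s : ℕ):ℝ)^m) :=
      mul_le_mul_of_nonneg_left hsum_lb (by positivity)
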